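/- For every x ∈ X and every character γ of S, the left regular representation π_{x,γ} extends to a covariant representation of the group system (C(X̃), G): there exist a complex Hilbert space K, a linear isometry V : ℓ²(S) → K, a unital *-homomorphism Φ from C(X̃) into the bounded operators on K, and a group homomorphism U from G into the unitary group of K such that (i) Φ(F) U(g) = U(g) Φ(F ∘ σ̃_g) for all F ∈ C(X̃) and g ∈ G; (ii) U(i(s)) ∘ V = V ∘ π_{x,γ}(S_s) for all s ∈ S; and (iii) Φ(f ∘ p) ∘ V = V ∘ π_{x,γ}(f) for all f ∈ C(X). In particular, the range of V is invariant under every U(i(s)) and every Φ(f ∘ p), so π_{x,γ} is the restriction of this covariant representation to a subspace (π_{x,γ} is a Shilov representation). -/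

import Mathlib

/-- The canonical extension space `X̃ ⊆ X^G`. -/
def canonicalExt {S X G : Type} [TopologicalSpace X] [Add G]
    (σ : S → C(X, X)) (i : S → G) : Set (G → X) :=
  {x : G → X | ∀ (g h : G) (u : S), g = h + i u → x h = (σ u) (x g)}



noncomputable section

namespace ShilovAux

open Function
open scoped ENNReal

abbrev L2 (ι : Type) : Type := lp (fun _ : ι => ℂ) 2

lemma two_toReal : ((2 : ℝ≥0∞)).toReal = 2 := by norm_num

lemma two_toReal_pos : 0 < ((2 : ℝ≥0∞)).toReal := by rw [two_toReal]; norm_num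

theorem memℓp_extend {ι κ : Type} {j : ι → κ} (hj : Function.Injective j) (f : L2 ι) :
    Memℓp (Function.extend j (⇑f) 0) 2 := by
  apply memℓp_gen
  have heq : (fun k => ‖Function.extend j (⇑f) 0 k‖ ^ (2 : ℝ≥0∞).toReal)
      = Function.extend j (fun a => ‖f a‖ ^ (2 : ℝ≥0∞).toReal) 0 := by
    funext k
    by_cases hk : ∃ a, j a = k
    · obtain ⟨a, rfl⟩ := hk
      rw [hj.extend_apply, hj.extend_apply]
    · rw [Function.extend_apply' _ _ _ hk, Function.extend_apply' _ _ _ hk]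
      simp [Real.zero_rpow two_toReal_pos.ne']
  rw [heq, summable_extend_zero hj]
  exact (lp.memℓp f).summable two_toReal_pos

def extIso {ι κ : Type} (j : ι → κ) (hj : Function.Injective j) :
    L2 ι →ₗᵢ[ℂ] L2 κ where
  toLinearMap :=
    { toFun := fun f => ⟨Function.extend j (⇑f) 0, memℓp_extend hj f⟩
      map_add' := by
        intro f g
        apply lp.ext
        funext k
        by_cases hk : ∃ a, j a = k
        · obtain ⟨a, rfl⟩ := hk
          show Function.extend j (⇑(f + g)) 0 (j a) = _
          rw [hj.extend_apply]
          have h1 : (↑(f + g) : ∀ _ : ι, ℂ) a = f a + g a := by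
            rw [lp.coeFn_add]; rfl
          rw [h1]
          show _ = Function.extend j (⇑f) 0 (j a) + Function.extend j (⇑g) 0 (j a)
          rw [hj.extend_apply, hj.extend_apply]
        · show Function.extend j (⇑(f + g)) 0 k = _
          rw [Function.extend_apply' _ _ _ hk]
          show _ = Function.extend j (⇑f) 0 k + Function.extend j (⇑g) 0 k
          rw [Function.extend_apply' _ _ _ hk, Function.extend_apply' _ _ _ hk]
          simp
      map_smul' := by
        intro c f
        apply lp.ext
        funext k
        by_cases hk : ∃ a, j a = k
        · obtain ⟨a, rfl⟩ := hk
          show Function.extend j (⇑(c • f)) 0 (j a) = _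
          rw [hj.extend_apply]
          have h1 : (↑(c • f) : ∀ _ : ι, ℂ) a = c * f a := by
            rw [lp.coeFn_smul]; rfl
          rw [h1]
          show _ = c • Function.extend j (⇑f) 0 (j a)
          rw [hj.extend_apply]; rfl
        · show Function.extend j (⇑(c • f)) 0 k = _
          rw [Function.extend_apply' _ _ _ hk]
          show _ = c • Function.extend j (⇑f) 0 k
          rw [Function.extend_apply' _ _ _ hk]
          simp }
  norm_map' := by
    intro f
    refine Real.rpow_left_injOn two_toReal_pos.ne' (norm_nonneg _) (norm_nonneg _) ?_
    simp only
    rw [lp.norm_rpow_eq_tsum two_toReal_pos, lp.norm_rpow_eq_tsum two_toReal_pos]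
    have hs : Function.support (fun k => ‖Function.extend j (⇑f) 0 k‖ ^ (2 : ℝ≥0∞).toReal)
        ⊆ Set.range j := by
      intro k hk
      by_contra h
      apply hk
      show ‖Function.extend j (⇑f) 0 k‖ ^ (2 : ℝ≥0∞).toReal = 0
      rw [Function.extend_apply' _ _ _ (by simpa using h)]
      simp [Real.zero_rpow two_toReal_pos.ne']
    show (∑' (k : κ), ‖Function.extend j (⇑f) 0 k‖ ^ (2 : ℝ≥0∞).toReal)
        = ∑' (a : ι), ‖f a‖ ^ (2 : ℝ≥0∞).toReal
    rw [← hj.tsum_eq hs]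
    exact tsum_congr fun a => by rw [hj.extend_apply]

lemma extIso_coeFn {ι κ : Type} (j : ι → κ) (hj : Function.Injective j) (f : L2 ι) :
    ⇑(extIso j hj f) = Function.extend j (⇑f) 0 := rfl

lemma extIso_apply_mem {ι κ : Type} (j : ι → κ) (hj : Function.Injective j) (f : L2 ι) (a : ι) :
    extIso j hj f (j a) = f a := hj.extend_apply _ _ _

lemma extIso_apply_not_mem {ι κ : Type} (j : ι → κ) (hj : Function.Injective j) (f : L2 ι)
    {k : κ} (hk : ¬∃ a, j a = k) : extIso j hj f k = 0 := by
  show Function.extend j (⇑f) 0 k = 0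
  rw [Function.extend_apply' _ _ _ hk]; rfl

theorem memℓp_mul {ι : Type} (m : ι → ℂ) (C : ℝ) (hC : 0 ≤ C) (hm : ∀ k, ‖m k‖ ≤ C)
    (f : L2 ι) : Memℓp (fun k => m k * f k) 2 := by
  apply memℓp_gen
  have hsum := (lp.memℓp f).summable two_toReal_pos
  refine Summable.of_nonneg_of_le (fun k => by positivity) (fun k => ?_)
    (hsum.mul_left (C ^ (2 : ℝ≥0∞).toReal))
  calc ‖m k * f k‖ ^ (2 : ℝ≥0∞).toReal = (‖m k‖ * ‖f k‖) ^ (2 : ℝ≥0∞).toReal := by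
        rw [norm_mul]
    _ ≤ (C * ‖f k‖) ^ (2 : ℝ≥0∞).toReal :=
        Real.rpow_le_rpow (by positivity)
          (mul_le_mul_of_nonneg_right (hm k) (norm_nonneg _)) two_toReal_pos.le
    _ = C ^ (2 : ℝ≥0∞).toReal * ‖f k‖ ^ (2 : ℝ≥0∞).toReal :=
        Real.mul_rpow hC (norm_nonneg _)

def mulOp {ι : Type} (m : ι → ℂ) (C : ℝ) (hC : 0 ≤ C) (hm : ∀ k, ‖m k‖ ≤ C) :
    L2 ι →L[ℂ] L2 ι :=
  LinearMap.mkContinuous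
    { toFun := fun f => ⟨fun k => m k * f k, memℓp_mul m C hC hm f⟩
      map_add' := by
        intro f g
        apply lp.ext
        funext k
        show m k * (↑(f + g) : ∀ _ : ι, ℂ) k = _
        rw [lp.coeFn_add]
        show m k * (f k + g k) = m k * f k + m k * g k
        ring
      map_smul' := by
        intro c f
        apply lp.ext
        funext k
        show m k * (↑(c • f) : ∀ _ : ι, ℂ) k = _
        rw [lp.coeFn_smul]
        show m k * (c * f k) = c * (m k * f k)
        ring }
    C
    (by
      intro f
      simp only [LinearMap.coe_mk, AddHom.coe_mk]
      rw [← Real.rpow_le_rpow_iff (norm_nonneg _) (by positivity) two_toReal_pos,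
        lp.norm_rpow_eq_tsum two_toReal_pos, Real.mul_rpow hC (norm_nonneg _),
        lp.norm_rpow_eq_tsum two_toReal_pos, ← tsum_mul_left]
      refine Summable.tsum_le_tsum (fun k => ?_)
        ((memℓp_mul m C hC hm f).summable two_toReal_pos)
        (((lp.memℓp f).summable two_toReal_pos).mul_left _)
      calc ‖m k * f k‖ ^ (2 : ℝ≥0∞).toReal = (‖m k‖ * ‖f k‖) ^ (2 : ℝ≥0∞).toReal := by
            rw [norm_mul]
        _ ≤ (C * ‖f k‖) ^ (2 : ℝ≥0∞).toReal :=
            Real.rpow_le_rpow (by positivity)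
              (mul_le_mul_of_nonneg_right (hm k) (norm_nonneg _)) two_toReal_pos.le
        _ = C ^ (2 : ℝ≥0∞).toReal * ‖f k‖ ^ (2 : ℝ≥0∞).toReal :=
            Real.mul_rpow hC (norm_nonneg _))

lemma mulOp_apply {ι : Type} (m : ι → ℂ) (C : ℝ) (hC : 0 ≤ C) (hm : ∀ k, ‖m k‖ ≤ C)
    (f : L2 ι) (k : ι) : mulOp m C hC hm f k = m k * f k := rfl

theorem clm_ext_single {ι : Type} [DecidableEq ι] {H : Type*} [NormedAddCommGroup H]
    [NormedSpace ℂ H] (A B : L2 ι →L[ℂ] H)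
    (h : ∀ a, A (lp.single 2 a 1) = B (lp.single 2 a 1)) : A = B := by
  ext f
  have hf : HasSum (fun a => lp.single 2 a (f a)) f := lp.hasSum_single ENNReal.ofNat_ne_top f
  have hss : ∀ (a : ι) (c : ℂ),
      (lp.single 2 a c : L2 ι) = c • (lp.single 2 a (1 : ℂ) : L2 ι) := by
    intro a c
    apply lp.ext; funext k
    rw [lp.coeFn_smul, Pi.smul_apply]
    by_cases hk : k = a
    · subst hk; rw [lp.single_apply_self, lp.single_apply_self, smul_eq_mul, mul_one]
    · rw [lp.single_apply_ne _ _ _ hk, lp.single_apply_ne _ _ _ hk, smul_eq_mul, mul_zero]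
  have h1 : ∀ (T : L2 ι →L[ℂ] H) (a : ι),
      T (lp.single 2 a (f a)) = f a • T (lp.single 2 a 1) := by
    intro T a
    rw [hss a (f a), map_smul]
  have hA := hf.mapL A
  have hB := hf.mapL B
  refine hA.unique ?_
  have : (fun a => A (lp.single 2 a (f a))) = fun a => B (lp.single 2 a (f a)) := by
    funext a; rw [h1 A, h1 B, h]
  rw [this]
  exact hB

lemma conj_mul_self_of_norm_one {z : ℂ} (hz : ‖z‖ = 1) : (starRingEnd ℂ) z * z = 1 := by
  rw [mul_comm, Complex.mul_conj, Complex.normSq_eq_norm_sq, hz]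
  norm_num


section Ubase

variable {G : Type} [AddCommGroup G]

def Ubase (γ' : G → ℂ) (g : G) : L2 G →L[ℂ] L2 G :=
  γ' g • (extIso (fun h => g + h)
    (fun a b hab => add_left_cancel hab)).toContinuousLinearMap

lemma Ubase_coord (γ' : G → ℂ) (g : G) (f : L2 G) (k : G) :
    Ubase γ' g f k = γ' g * f (-g + k) := by
  simp only [Ubase, ContinuousLinearMap.smul_apply]
  rw [lp.coeFn_smul, Pi.smul_apply, smul_eq_mul]
  congr 1
  rw [LinearIsometry.coe_toContinuousLinearMap]
  have h := extIso_apply_mem (fun h => g + h)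
    (fun a b hab => add_left_cancel hab) f (-g + k)
  rwa [add_neg_cancel_left] at h

lemma Ubase_zero {γ' : G → ℂ} (h0 : γ' 0 = 1) :
    Ubase γ' 0 = ContinuousLinearMap.id ℂ (L2 G) := by
  refine ContinuousLinearMap.ext fun f => ?_
  apply lp.ext; funext k
  rw [Ubase_coord, h0, one_mul, ContinuousLinearMap.id_apply, neg_zero, zero_add]

lemma Ubase_add {γ' : G → ℂ} (hadd : ∀ g h : G, γ' (g + h) = γ' g * γ' h) (g h : G) :
    Ubase γ' (g + h) = (Ubase γ' g).comp (Ubase γ' h) := by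
  refine ContinuousLinearMap.ext fun f => ?_
  apply lp.ext; funext k
  rw [ContinuousLinearMap.comp_apply, Ubase_coord, Ubase_coord, Ubase_coord, hadd]
  rw [show -(g + h) + k = -h + (-g + k) by abel]
  ring

lemma Ubase_inner {γ' : G → ℂ} (hnorm : ∀ g, ‖γ' g‖ = 1) (g : G) (ξ η : L2 G) :
    (inner ℂ (Ubase γ' g ξ) (Ubase γ' g η) : ℂ) = inner ℂ ξ η := by
  simp only [Ubase, ContinuousLinearMap.smul_apply]
  rw [inner_smul_left, inner_smul_right, ← mul_assoc,
    conj_mul_self_of_norm_one (hnorm g), one_mul]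
  rw [LinearIsometry.coe_toContinuousLinearMap]
  exact LinearIsometry.inner_map_map _ ξ η

lemma Ubase_adjoint {γ' : G → ℂ} (h0 : γ' 0 = 1)
    (hadd : ∀ g h : G, γ' (g + h) = γ' g * γ' h) (hnorm : ∀ g, ‖γ' g‖ = 1) (g : G) :
    ContinuousLinearMap.adjoint (Ubase γ' g) = Ubase γ' (-g) := by
  have hinv1 : (Ubase γ' g).comp (Ubase γ' (-g)) = ContinuousLinearMap.id ℂ (L2 G) := by
    rw [← Ubase_add hadd, add_neg_cancel, Ubase_zero h0]
  have hadj : (ContinuousLinearMap.adjoint (Ubase γ' g)).comp (Ubase γ' g)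
      = ContinuousLinearMap.id ℂ (L2 G) := by
    refine ContinuousLinearMap.ext fun ξ => ext_inner_right ℂ fun v => ?_
    rw [ContinuousLinearMap.comp_apply, ContinuousLinearMap.adjoint_inner_left,
      Ubase_inner hnorm, ContinuousLinearMap.id_apply]
  calc ContinuousLinearMap.adjoint (Ubase γ' g)
      = (ContinuousLinearMap.adjoint (Ubase γ' g)).comp
          ((Ubase γ' g).comp (Ubase γ' (-g))) := by
        rw [hinv1, ContinuousLinearMap.comp_id]
    _ = ((ContinuousLinearMap.adjoint (Ubase γ' g)).comp (Ubase γ' g)).comp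
          (Ubase γ' (-g)) := by rw [ContinuousLinearMap.comp_assoc]
    _ = Ubase γ' (-g) := by rw [hadj, ContinuousLinearMap.id_comp]

lemma Ubase_single [DecidableEq G] (γ' : G → ℂ) (g k₀ : G) (c : ℂ) :
    Ubase γ' g (lp.single 2 k₀ c) = γ' g • (lp.single 2 (g + k₀) c : L2 G) := by
  apply lp.ext; funext k
  rw [lp.coeFn_smul, Pi.smul_apply, Ubase_coord, smul_eq_mul]
  congr 1
  by_cases hk : k = g + k₀
  · subst hk
    rw [show -g + (g + k₀) = k₀ by abel, lp.single_apply_self, lp.single_apply_self]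
  · rw [lp.single_apply_ne _ _ _ (fun h : -g + k = k₀ => hk (by rw [← h]; abel)),
      lp.single_apply_ne _ _ _ hk]

end Ubase

end ShilovAux

namespace ShilovAux

theorem isCompact_canonicalExt {S X G : Type} [TopologicalSpace X] [CompactSpace X]
    [T2Space X] [Add G] (σ : S → C(X, X)) (i : S → G) :
    IsCompact (canonicalExt σ i) := by
  apply IsClosed.isCompact
  have h : canonicalExt σ i =
      ⋂ (g : G) (h : G) (u : S) (_ : g = h + i u), {x : G → X | x h = σ u (x g)} := by
    ext y
    simp only [canonicalExt, Set.mem_setOf_eq, Set.mem_iInter]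
  rw [h]
  exact isClosed_iInter fun g => isClosed_iInter fun h => isClosed_iInter fun u =>
    isClosed_iInter fun _ =>
      isClosed_eq (continuous_apply h) ((σ u).continuous.comp (continuous_apply g))

theorem exists_thread {S X : Type} [AddCancelCommMonoid S] [TopologicalSpace X]
    [CompactSpace X] [T2Space X] [Nonempty X]
    (σ : S → C(X, X)) (hσ0 : σ 0 = ContinuousMap.id X)
    (hσadd : ∀ s t : S, σ (s + t) = (σ s).comp (σ t))
    (hσsurj : ∀ s : S, Function.Surjective (σ s)) (x : X) :
    ∃ τ : S → X, τ 0 = x ∧ ∀ s u : S, τ s = σ u (τ (s + u)) := by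
  classical
  set C : Finset (S × S) → Set (S → X) := fun F =>
    {τ | τ 0 = x ∧ ∀ p ∈ F, τ p.1 = σ p.2 (τ (p.1 + p.2))} with hCdef
  have hne : ∀ F, (C F).Nonempty := by
    intro F
    set w : S := ∑ p ∈ F, (p.1 + p.2) with hw
    obtain ⟨y, hy⟩ := hσsurj w x
    refine ⟨fun t => if h : ∃ r, t + r = w then σ h.choose y else x, ?_, ?_⟩
    · have h : ∃ r, (0 : S) + r = w := ⟨w, zero_add w⟩
      simp only [dif_pos h]
      have hch : h.choose = w := by
        have := h.choose_spec; rwa [zero_add] at this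
      rw [hch, hy]
    · rintro ⟨s, u⟩ hp
      have hws : (s + u) + ∑ p ∈ F.erase (s, u), (p.1 + p.2) = w :=
        Finset.add_sum_erase F (fun p => p.1 + p.2) hp
      set r : S := ∑ p ∈ F.erase (s, u), (p.1 + p.2) with hr
      have h1 : ∃ r', s + r' = w := ⟨u + r, by rw [← hws]; abel⟩
      have h2 : ∃ r', (s + u) + r' = w := ⟨r, hws⟩
      simp only [dif_pos h1, dif_pos h2]
      have e1 : h1.choose = u + r := by
        apply add_left_cancel (a := s)
        rw [h1.choose_spec, ← hws]; abel
      have e2 : h2.choose = r := by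
        apply add_left_cancel (a := s + u)
        rw [h2.choose_spec, hws]
      rw [e1, e2, hσadd, ContinuousMap.comp_apply]
  have hcl : ∀ F, IsClosed (C F) := by
    intro F
    have h : C F = {τ : S → X | τ 0 = x} ∩
        ⋂ p ∈ (F : Set (S × S)), {τ : S → X | τ p.1 = σ p.2 (τ (p.1 + p.2))} := by
      ext τ
      simp only [hCdef, Set.mem_setOf_eq, Set.mem_inter_iff, Set.mem_iInter, Finset.mem_coe]
    rw [h]
    exact (isClosed_eq (continuous_apply 0) continuous_const).inter
      (isClosed_biInter fun p _ =>
        isClosed_eq (continuous_apply _) ((σ _).continuous.comp (continuous_apply _)))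
  have hdir : Directed (· ⊇ ·) C := by
    intro F F'
    refine ⟨F ∪ F', fun τ hτ => ⟨hτ.1, fun p hp => hτ.2 p (Finset.mem_union_left _ hp)⟩,
      fun τ hτ => ⟨hτ.1, fun p hp => hτ.2 p (Finset.mem_union_right _ hp)⟩⟩
  obtain ⟨τ, hτ⟩ := IsCompact.nonempty_iInter_of_directed_nonempty_isCompact_isClosed
    C hdir hne (fun F => (hcl F).isCompact) hcl
  refine ⟨τ, (Set.mem_iInter.1 hτ ∅).1, fun s u => ?_⟩
  exact (Set.mem_iInter.1 hτ {(s, u)}).2 (s, u) (Finset.mem_singleton_self _)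

theorem exists_point {S X G : Type} [AddCancelCommMonoid S] [TopologicalSpace X]
    [CompactSpace X] [T2Space X] [Nonempty X] [AddCommGroup G]
    (σ : S → C(X, X)) (hσ0 : σ 0 = ContinuousMap.id X)
    (hσadd : ∀ s t : S, σ (s + t) = (σ s).comp (σ t))
    (hσsurj : ∀ s : S, Function.Surjective (σ s))
    (i : S → G) (hi0 : i 0 = 0) (hiadd : ∀ s t : S, i (s + t) = i s + i t)
    (hiinj : Function.Injective i) (hgen : ∀ g : G, ∃ s t : S, g = i s - i t)
    (x : X) : ∃ z : G → X, z ∈ canonicalExt σ i ∧ z 0 = x := by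
  classical
  obtain ⟨τ, hτ0, hτ⟩ := exists_thread σ hσ0 hσadd hσsurj x
  set z : G → X := fun g => σ (hgen g).choose_spec.choose (τ (hgen g).choose) with hz
  have hkey : ∀ (g : G) (s t : S), g = i s - i t → z g = σ t (τ s) := by
    intro g s t hg
    set s0 := (hgen g).choose
    set t0 := (hgen g).choose_spec.choose
    have h0 : g = i s0 - i t0 := (hgen g).choose_spec.choose_spec
    have he : i s0 + i t = i s + i t0 := by
      have := h0.symm.trans hg
      rwa [sub_eq_sub_iff_add_eq_add] at this
    have heq : s0 + t = s + t0 := hiinj (by rw [hiadd, hiadd]; exact he)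
    show σ t0 (τ s0) = σ t (τ s)
    calc σ t0 (τ s0) = σ t0 (σ t (τ (s0 + t))) := by rw [← hτ s0 t]
      _ = σ (t0 + t) (τ (s0 + t)) := by rw [hσadd, ContinuousMap.comp_apply]
      _ = σ (t + t0) (τ (s + t0)) := by rw [heq, add_comm t0 t]
      _ = σ t (σ t0 (τ (s + t0))) := by rw [hσadd, ContinuousMap.comp_apply]
      _ = σ t (τ s) := by rw [← hτ s t0]
  refine ⟨z, ?_, ?_⟩
  · intro g h u hg
    obtain ⟨s, t, hh⟩ := hgen h
    have hgst : g = i (s + u) - i t := by rw [hiadd, hg, hh]; abel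
    rw [hkey h s t hh, hkey g (s + u) t hgst]
    calc σ t (τ s) = σ t (σ u (τ (s + u))) := by rw [← hτ s u]
      _ = σ (t + u) (τ (s + u)) := by rw [hσadd, ContinuousMap.comp_apply]
      _ = σ (u + t) (τ (s + u)) := by rw [add_comm]
      _ = σ u (σ t (τ (s + u))) := by rw [hσadd, ContinuousMap.comp_apply]
  · rw [hkey 0 0 0 (by rw [hi0, sub_zero]), hτ0, hσ0]
    rfl

end ShilovAux

/-- the left regular representation `π_{x,γ}` extends to a covariant
representation of the group system `(C(X̃), G)`; in particular `π_{x,γ}` is Shilov. -/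
theorem left_regular_is_shilov
    {S : Type} [AddCancelCommMonoid S] [Countable S] [DecidableEq S]
    {X : Type} [MetricSpace X] [CompactSpace X] [Nonempty X]
    (σ : S → C(X, X))
    (hσ0 : σ 0 = ContinuousMap.id X)
    (hσadd : ∀ s t : S, σ (s + t) = (σ s).comp (σ t))
    (hσsurj : ∀ s : S, Function.Surjective (σ s))
    -- the enveloping group G = S - S
    {G : Type} [AddCommGroup G]
    (i : S → G) (hi0 : i 0 = 0) (hiadd : ∀ s t : S, i (s + t) = i s + i t)
    (hiinj : Function.Injective i)
    (hgen : ∀ g : G, ∃ s t : S, g = i s - i t)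
    -- the action of G on X̃ by homeomorphisms, extending σ̃ on S
    (σG : G → ((canonicalExt σ i) ≃ₜ (canonicalExt σ i)))
    (hσGhom : ∀ g h : G, σG (g + h) = (σG g).trans (σG h))
    (hσGS : ∀ (s : S) (z : canonicalExt σ i) (g : G),
      ((σG (i s)) z : G → X) g = (σ s) ((z : G → X) g))
    -- the projection p : X̃ → X as a continuous map
    (pC : C(canonicalExt σ i, X))
    (hpC : ∀ z : canonicalExt σ i, pC z = (z : G → X) 0)
    (x : X) (γ : S → ℂ)
    (hγ0 : γ 0 = 1) (hγadd : ∀ s t : S, γ (s + t) = γ s * γ t)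
    (hγabs : ∀ s : S, ‖γ s‖ = 1)
    -- the left regular representation π_{x,γ}
    (πf : C(X, ℂ) → (lp (fun _ : S => ℂ) 2 →L[ℂ] lp (fun _ : S => ℂ) 2))
    (πS : S → (lp (fun _ : S => ℂ) 2 →L[ℂ] lp (fun _ : S => ℂ) 2))
    (hπf : ∀ (f : C(X, ℂ)) (η : lp (fun _ : S => ℂ) 2) (s : S),
      (πf f η) s = f ((σ s) x) * η s)
    (hπS : ∀ (t s : S), πS t (lp.single 2 s (1 : ℂ)) = γ t • lp.single 2 (t + s) (1 : ℂ)) :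
    ∃ (K : Type) (_ : NormedAddCommGroup K) (_ : InnerProductSpace ℂ K)
      (_ : CompleteSpace K)
      (V : lp (fun _ : S => ℂ) 2 →ₗᵢ[ℂ] K)
      (Φ : C(canonicalExt σ i, ℂ) → (K →L[ℂ] K))
      (U : G → (K →L[ℂ] K)),
      -- Φ is a unital *-homomorphism
      (Φ 1 = ContinuousLinearMap.id ℂ K) ∧
      (∀ F₁ F₂ : C(canonicalExt σ i, ℂ), Φ (F₁ * F₂) = (Φ F₁).comp (Φ F₂)) ∧
      (∀ (c : ℂ) (F₁ F₂ : C(canonicalExt σ i, ℂ)), Φ (c • F₁ + F₂) = c • Φ F₁ + Φ F₂) ∧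
      (∀ F : C(canonicalExt σ i, ℂ), Φ (star F) = ContinuousLinearMap.adjoint (Φ F)) ∧
      -- U is a group homomorphism of G into the unitary group of K
      (U 0 = ContinuousLinearMap.id ℂ K) ∧
      (∀ g h : G, U (g + h) = (U g).comp (U h)) ∧
      (∀ g : G, (U g).comp (ContinuousLinearMap.adjoint (U g)) = ContinuousLinearMap.id ℂ K) ∧
      (∀ g : G, (ContinuousLinearMap.adjoint (U g)).comp (U g) = ContinuousLinearMap.id ℂ K) ∧
      -- (i) the covariance relation for (C(X̃), G)
      (∀ (F : C(canonicalExt σ i, ℂ)) (g : G),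
        (Φ F).comp (U g) = (U g).comp (Φ (F.comp (σG g : C(canonicalExt σ i, canonicalExt σ i))))) ∧
      -- (ii) U(i s) restricts to π_{x,γ}(S_s) on the range of V
      (∀ (s : S) (η : lp (fun _ : S => ℂ) 2), U (i s) (V η) = V (πS s η)) ∧
      -- (iii) Φ(f ∘ p) restricts to π_{x,γ}(f) on the range of V
      (∀ (f : C(X, ℂ)) (η : lp (fun _ : S => ℂ) 2), Φ (f.comp pC) (V η) = V (πf f η)) ∧
      -- in particular the range of V is invariant
      (∀ (s : S) (η : lp (fun _ : S => ℂ) 2), ∃ ζ, U (i s) (V η) = V ζ) ∧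
      (∀ (f : C(X, ℂ)) (η : lp (fun _ : S => ℂ) 2), ∃ ζ, Φ (f.comp pC) (V η) = V ζ) := by
  classical
  haveI : CompactSpace (canonicalExt σ i) :=
    isCompact_iff_compactSpace.mp (ShilovAux.isCompact_canonicalExt σ i)
  obtain ⟨zf, hzmem, hz0⟩ :=
    ShilovAux.exists_point σ hσ0 hσadd hσsurj i hi0 hiadd hiinj hgen x
  set z : canonicalExt σ i := ⟨zf, hzmem⟩ with hzdef
  -- the extended character γ' on G
  set γ' : G → ℂ :=
    fun g => γ (hgen g).choose * (starRingEnd ℂ) (γ (hgen g).choose_spec.choose) with hγ'def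
  have hγ'key : ∀ (g : G) (s t : S), g = i s - i t →
      γ' g = γ s * (starRingEnd ℂ) (γ t) := by
    intro g s t hg
    have h0 : g = i (hgen g).choose - i (hgen g).choose_spec.choose :=
      (hgen g).choose_spec.choose_spec
    set s0 := (hgen g).choose
    set t0 := (hgen g).choose_spec.choose
    have he : i s0 + i t = i s + i t0 := by
      have h1 := h0.symm.trans hg
      rwa [sub_eq_sub_iff_add_eq_add] at h1
    have heq : s0 + t = s + t0 := hiinj (by rw [hiadd, hiadd]; exact he)
    have e : γ s0 * γ t = γ s * γ t0 := by rw [← hγadd, ← hγadd, heq]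
    have u1 : γ t * (starRingEnd ℂ) (γ t) = 1 := by
      rw [mul_comm]; exact ShilovAux.conj_mul_self_of_norm_one (hγabs t)
    have u2 : γ t0 * (starRingEnd ℂ) (γ t0) = 1 := by
      rw [mul_comm]; exact ShilovAux.conj_mul_self_of_norm_one (hγabs t0)
    show γ s0 * (starRingEnd ℂ) (γ t0) = γ s * (starRingEnd ℂ) (γ t)
    linear_combination ((starRingEnd ℂ) (γ t) * (starRingEnd ℂ) (γ t0)) * e
      - γ s0 * (starRingEnd ℂ) (γ t0) * u1 + γ s * (starRingEnd ℂ) (γ t) * u2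
  have hγ'i : ∀ s : S, γ' (i s) = γ s := by
    intro s
    rw [hγ'key (i s) s 0 (by rw [hi0, sub_zero]), hγ0, map_one, mul_one]
  have hγ'0 : γ' 0 = 1 := by
    rw [hγ'key 0 0 0 (by rw [hi0, sub_zero]), hγ0, map_one, mul_one]
  have hγ'add : ∀ g h : G, γ' (g + h) = γ' g * γ' h := by
    intro g h
    obtain ⟨s, t, hg⟩ := hgen g
    obtain ⟨s', t', hh⟩ := hgen h
    have hsum : g + h = i (s + s') - i (t + t') := by rw [hiadd, hiadd, hg, hh]; abel
    rw [hγ'key _ _ _ hsum, hγ'key _ _ _ hg, hγ'key _ _ _ hh, hγadd, hγadd, map_mul]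
    ring
  have hγ'norm : ∀ g : G, ‖γ' g‖ = 1 := by
    intro g
    obtain ⟨s, t, hg⟩ := hgen g
    rw [hγ'key _ _ _ hg, norm_mul, hγabs, RCLike.norm_conj, hγabs, mul_one]
  -- the pieces
  set V : lp (fun _ : S => ℂ) 2 →ₗᵢ[ℂ] ShilovAux.L2 G := ShilovAux.extIso i hiinj with hVdef
  set Φ : C(canonicalExt σ i, ℂ) → (ShilovAux.L2 G →L[ℂ] ShilovAux.L2 G) :=
    fun F => ShilovAux.mulOp (fun k => F ((σG k) z)) ‖F‖ (norm_nonneg F)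
      (fun k => F.norm_coe_le_norm _) with hΦdef
  set U : G → (ShilovAux.L2 G →L[ℂ] ShilovAux.L2 G) :=
    fun g => ShilovAux.Ubase γ' g with hUdef
  have hVsingle : ∀ (a : S) (c : ℂ),
      V (lp.single 2 a c) = lp.single 2 (i a) c := by
    intro a c
    apply lp.ext; funext k
    simp only [hVdef]
    by_cases hk : ∃ b : S, i b = k
    · obtain ⟨b, rfl⟩ := hk
      rw [ShilovAux.extIso_apply_mem]
      by_cases hb : b = a
      · subst hb; rw [lp.single_apply_self, lp.single_apply_self]
      · rw [lp.single_apply_ne _ _ _ hb,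
          lp.single_apply_ne _ _ _ (fun h : i b = i a => hb (hiinj h))]
    · rw [ShilovAux.extIso_apply_not_mem _ _ _ hk,
        lp.single_apply_ne _ _ _ (fun h : k = i a => hk ⟨a, h.symm⟩)]
  refine ⟨ShilovAux.L2 G, inferInstance, inferInstance, inferInstance, V, Φ, U,
    ?_, ?_, ?_, ?_, ?_, ?_, ?_, ?_, ?_, ?_, ?_, ?_, ?_⟩
  · -- Φ 1 = id
    refine ContinuousLinearMap.ext fun f => ?_
    apply lp.ext; funext k
    simp only [hΦdef]
    rw [ShilovAux.mulOp_apply, ContinuousMap.one_apply, one_mul,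
      ContinuousLinearMap.id_apply]
  · -- multiplicative
    intro F₁ F₂
    refine ContinuousLinearMap.ext fun f => ?_
    apply lp.ext; funext k
    rw [hΦdef, ContinuousLinearMap.comp_apply]
    rw [ShilovAux.mulOp_apply, ShilovAux.mulOp_apply, ShilovAux.mulOp_apply,
      ContinuousMap.mul_apply]
    ring
  · -- linear
    intro c F₁ F₂
    refine ContinuousLinearMap.ext fun f => ?_
    apply lp.ext; funext k
    simp only [hΦdef]
    rw [ContinuousLinearMap.add_apply, ContinuousLinearMap.smul_apply]
    rw [lp.coeFn_add, Pi.add_apply, lp.coeFn_smul, Pi.smul_apply]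
    rw [ShilovAux.mulOp_apply, ShilovAux.mulOp_apply, ShilovAux.mulOp_apply,
      ContinuousMap.add_apply, ContinuousMap.smul_apply, smul_eq_mul, smul_eq_mul]
    ring
  · -- star ↦ adjoint
    intro F
    simp only [hΦdef]
    rw [ContinuousLinearMap.eq_adjoint_iff]
    intro ξ η
    rw [lp.inner_eq_tsum, lp.inner_eq_tsum]
    refine tsum_congr fun k => ?_
    rw [ShilovAux.mulOp_apply, ShilovAux.mulOp_apply, RCLike.inner_apply,
      RCLike.inner_apply, ContinuousMap.star_apply, Complex.star_def, map_mul,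
      Complex.conj_conj]
    ring
  · -- U 0 = id
    simp only [hUdef]
    exact ShilovAux.Ubase_zero hγ'0
  · -- U additive
    intro g h
    simp only [hUdef]
    exact ShilovAux.Ubase_add hγ'add g h
  · -- U g ∘ (U g)† = id
    intro g
    rw [hUdef, ShilovAux.Ubase_adjoint hγ'0 hγ'add hγ'norm,
      ← ShilovAux.Ubase_add hγ'add, add_neg_cancel, ShilovAux.Ubase_zero hγ'0]
  · -- (U g)† ∘ U g = id
    intro g
    rw [hUdef, ShilovAux.Ubase_adjoint hγ'0 hγ'add hγ'norm,
      ← ShilovAux.Ubase_add hγ'add, neg_add_cancel, ShilovAux.Ubase_zero hγ'0]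
  · -- covariance
    intro F g
    refine ContinuousLinearMap.ext fun f => ?_
    apply lp.ext; funext k
    rw [ContinuousLinearMap.comp_apply, ContinuousLinearMap.comp_apply]
    simp only [hΦdef, hUdef]
    rw [ShilovAux.mulOp_apply, ShilovAux.Ubase_coord, ShilovAux.Ubase_coord,
      ShilovAux.mulOp_apply]
    have hcomp : (F.comp ((σG g : C(canonicalExt σ i, canonicalExt σ i))))
        ((σG (-g + k)) z) = F ((σG k) z) := by
      rw [ContinuousMap.comp_apply]
      congr 1
      have e1 : σG k = (σG (-g + k)).trans (σG g) := by
        rw [← hσGhom]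
        congr 1
        abel
      rw [e1, Homeomorph.trans_apply]
      rfl
    rw [hcomp]
    ring
  · -- (ii)
    intro s η
    have hAB : (U (i s)).comp V.toContinuousLinearMap
        = V.toContinuousLinearMap.comp (πS s) := by
      apply ShilovAux.clm_ext_single
      intro a
      simp only [ContinuousLinearMap.comp_apply, LinearIsometry.coe_toContinuousLinearMap]
      rw [hVsingle, hπS s a, map_smul, hVsingle, hUdef]
      rw [ShilovAux.Ubase_single, hγ'i, hiadd]
    have h := ContinuousLinearMap.ext_iff.mp hAB η
    simp only [ContinuousLinearMap.comp_apply,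
      LinearIsometry.coe_toContinuousLinearMap] at h
    exact h
  · -- (iii)
    intro f η
    apply lp.ext; funext k
    simp only [hΦdef, hVdef]
    rw [ShilovAux.mulOp_apply]
    by_cases hk : ∃ a : S, i a = k
    · obtain ⟨a, rfl⟩ := hk
      rw [ShilovAux.extIso_apply_mem, ShilovAux.extIso_apply_mem, hπf f η a]
      congr 1
      rw [ContinuousMap.comp_apply, hpC, hσGS a z 0]
      show f (σ a (zf 0)) = f (σ a x)
      rw [hz0]
    · rw [ShilovAux.extIso_apply_not_mem _ _ _ hk,
        ShilovAux.extIso_apply_not_mem _ _ _ hk, mul_zero]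
  · -- range invariance under U
    intro s η
    refine ⟨πS s η, ?_⟩
    have hAB : (U (i s)).comp V.toContinuousLinearMap
        = V.toContinuousLinearMap.comp (πS s) := by
      apply ShilovAux.clm_ext_single
      intro a
      simp only [ContinuousLinearMap.comp_apply, LinearIsometry.coe_toContinuousLinearMap]
      rw [hVsingle, hπS s a, map_smul, hVsingle, hUdef]
      rw [ShilovAux.Ubase_single, hγ'i, hiadd]
    have h := ContinuousLinearMap.ext_iff.mp hAB η
    simp only [ContinuousLinearMap.comp_apply,
      LinearIsometry.coe_toContinuousLinearMap] at h
    exact h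
  · -- range invariance under Φ(f ∘ p)
    intro f η
    refine ⟨πf f η, ?_⟩
    apply lp.ext; funext k
    simp only [hΦdef, hVdef]
    rw [ShilovAux.mulOp_apply]
    by_cases hk : ∃ a : S, i a = k
    · obtain ⟨a, rfl⟩ := hk
      rw [ShilovAux.extIso_apply_mem, ShilovAux.extIso_apply_mem, hπf f η a]
      congr 1
      rw [ContinuousMap.comp_apply, hpC, hσGS a z 0]
      show f (σ a (zf 0)) = f (σ a x)
      rw [hz0]
    · rw [ShilovAux.extIso_apply_not_mem _ _ _ hk,
        ShilovAux.extIso_apply_not_mem _ _ _ hk, mul_zero]
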